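/- Let μ be a Radon measure on ℝ, x ∈ spt μ, and suppose there exist c_i > 0 and r_i ↘ 0 such that c_i T_{x,r_i♯}μ → L⁺ weakly, where L⁺ = L⌞[0,∞) is the Heaviside measure. Then there is a subsequence (i_j) such that μ(B(x,r_{i_j}))^{−1} T_{x,r_{i_j}♯}μ → L⁺ weakly as j → ∞. -/

import Mathlib

open MeasureTheory Filter Topology Metric Set

noncomputable section

/-- Weak convergence of a sequence of Radon measures on ℝ, tested against
continuous compactly supported functions. -/
def WeakTendstoR (μs : ℕ → Measure ℝ) (ν : Measure ℝ) : Prop :=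
  ∀ φ : ℝ → ℝ, Continuous φ → HasCompactSupport φ →
    Tendsto (fun i => ∫ x, φ x ∂(μs i)) atTop (𝓝 (∫ x, φ x ∂ν))

/-- The measure `c • T_{x,r♯} μ`, where `T_{x,r♯}μ(A) = μ(rA + x)`. -/
def blowupR (μ : Measure ℝ) (x r c : ℝ) : Measure ℝ :=
  ENNReal.ofReal c • Measure.map (fun y => (y - x) / r) μ

/-- `ν` is a tangent measure of `μ` at `x`: `ν` is a non-zero Radon measure and
`c_i T_{x,r_i♯}μ → ν` weakly for some `r_i ↘ 0`, `c_i > 0`. -/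
def IsTangentMeasureR (μ : Measure ℝ) (x : ℝ) (ν : Measure ℝ) : Prop :=
  IsLocallyFiniteMeasure ν ∧ ν ≠ 0 ∧
    ∃ r c : ℕ → ℝ, (∀ i, 0 < r i) ∧ StrictAnti r ∧ Tendsto r atTop (𝓝 0) ∧
      (∀ i, 0 < c i) ∧ WeakTendstoR (fun i => blowupR μ x (r i) (c i)) ν

/-- The support of a measure on ℝ. -/
def sptR (μ : Measure ℝ) : Set ℝ := {x | ∀ r > 0, 0 < μ (closedBall x r)}

/-- The Heaviside measure `L⁺ = L ⌞ [0,∞)`. -/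
def heaviside : Measure ℝ := volume.restrict (Ici 0)

/-- if `μ` is a Radon measure on ℝ, `x ∈ spt μ`, and
`c_i T_{x,r_i♯}μ → L⁺` weakly for some `c_i > 0` and `r_i ↘ 0`, then along a subsequence
`μ(B(x,r_{i_j}))⁻¹ T_{x,r_{i_j}♯}μ → L⁺` weakly. -/
def bumpFn (s t : ℝ) (y : ℝ) : ℝ := max 0 (min 1 ((t - |y|) / (t - s)))

lemma bumpFn_cont (s t : ℝ) : Continuous (bumpFn s t) := by
  unfold bumpFn
  exact continuous_const.max (continuous_const.min ((continuous_const.sub continuous_abs).div_const _))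

lemma bumpFn_nonneg (s t y : ℝ) : 0 ≤ bumpFn s t y := le_max_left _ _

lemma bumpFn_le_one (s t y : ℝ) : bumpFn s t y ≤ 1 :=
  max_le zero_le_one (min_le_left _ _)

lemma bumpFn_eq_one {s t y : ℝ} (hst : s < t) (hy : |y| ≤ s) : bumpFn s t y = 1 := by
  have h1 : (1:ℝ) ≤ (t - |y|) / (t - s) := by
    rw [le_div_iff₀ (by linarith)]; linarith
  simp [bumpFn, min_eq_left h1]

lemma bumpFn_eq_zero {s t y : ℝ} (hst : s < t) (hy : t ≤ |y|) : bumpFn s t y = 0 := by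
  have h1 : (t - |y|) / (t - s) ≤ 0 :=
    div_nonpos_of_nonpos_of_nonneg (by linarith) (by linarith)
  have h2 : min 1 ((t - |y|) / (t - s)) ≤ 0 := le_trans (min_le_right _ _) h1
  simp [bumpFn, max_eq_left h2]

lemma bumpFn_support {s t : ℝ} (hst : s < t) : HasCompactSupport (bumpFn s t) := by
  refine HasCompactSupport.intro (isCompact_Icc (a := -t) (b := t)) fun y hy => ?_
  refine bumpFn_eq_zero hst ?_
  simp only [mem_Icc, not_and_or, not_le] at hy
  rcases hy with h | h
  · exact le_abs.2 (Or.inr (by linarith))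
  · exact le_abs.2 (Or.inl h.le)

-- integral of an indicator of Icc against a measure
lemma integral_indicator_Icc (ν : Measure ℝ) (a b : ℝ) :
    ∫ y, (Icc a b).indicator (fun _ => (1:ℝ)) y ∂ν = (ν (Icc a b)).toReal := by
  rw [integral_indicator_const (1:ℝ) measurableSet_Icc, smul_eq_mul, mul_one]
  rfl

lemma integrable_indicator_Icc (ν : Measure ℝ) (a b : ℝ) (h : ν (Icc a b) < ⊤) :
    Integrable ((Icc a b).indicator (fun _ => (1:ℝ))) ν := by
  refine (IntegrableOn.integrable_indicator ?_ measurableSet_Icc)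
  exact integrableOn_const h.ne


lemma heaviside_Icc {a b : ℝ} (ha : a ≤ 0) (hb : 0 ≤ b) :
    heaviside (Icc a b) = ENNReal.ofReal b := by
  have h : Icc a b ∩ Ici 0 = Icc 0 b := by
    ext y
    simp only [mem_inter_iff, mem_Icc, mem_Ici]
    constructor
    · rintro ⟨⟨_, h2⟩, h3⟩; exact ⟨h3, h2⟩
    · rintro ⟨h1, h2⟩; exact ⟨⟨by linarith, h2⟩, h1⟩
  rw [heaviside, Measure.restrict_apply measurableSet_Icc, h, Real.volume_Icc, sub_zero]

theorem stmt_8 (μ : Measure ℝ) (hRadon : IsLocallyFiniteMeasure μ) (x : ℝ)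
    (hx : x ∈ sptR μ) (r c : ℕ → ℝ)
    (hrpos : ∀ i, 0 < r i) (hranti : StrictAnti r) (hr0 : Tendsto r atTop (𝓝 0))
    (hcpos : ∀ i, 0 < c i)
    (hconv : WeakTendstoR (fun i => blowupR μ x (r i) (c i)) heaviside) :
    ∃ φ : ℕ → ℕ, StrictMono φ ∧
      WeakTendstoR
        (fun j => (μ (closedBall x (r (φ j))))⁻¹ •
          Measure.map (fun y => (y - x) / r (φ j)) μ)
        heaviside := by
  classical
  have hmeas : ∀ i, Measurable (fun y : ℝ => (y - x) / r i) :=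
    fun i => (measurable_id.sub_const x).div_const _
  have hfin : ∀ i, μ (closedBall x (r i)) < ⊤ :=
    fun i => (isCompact_closedBall x (r i)).measure_lt_top
  have hpos : ∀ i, 0 < μ (closedBall x (r i)) := fun i => hx _ (hrpos i)
  have hpre : ∀ i, (fun y : ℝ => (y - x) / r i) ⁻¹' (Icc (-1) 1) = closedBall x (r i) := by
    intro i
    ext y
    have hr := hrpos i
    simp only [mem_preimage, mem_Icc, mem_closedBall, Real.dist_eq]
    rw [div_le_one hr, le_div_iff₀ hr, abs_le]
    constructor <;> rintro ⟨h1, h2⟩ <;> constructor <;> nlinarith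
  have hBmeas : ∀ i, blowupR μ x (r i) (c i) (Icc (-1) 1)
      = ENNReal.ofReal (c i) * μ (closedBall x (r i)) := by
    intro i
    rw [blowupR, Measure.smul_apply, smul_eq_mul,
      Measure.map_apply (hmeas i) measurableSet_Icc, hpre i]
  have hBlt : ∀ i, blowupR μ x (r i) (c i) (Icc (-1) 1) < ⊤ := by
    intro i
    rw [hBmeas i]
    exact ENNReal.mul_lt_top ENNReal.ofReal_lt_top (hfin i)
  -- blowup measures are finite on compacts
  have hfc : ∀ i, IsFiniteMeasureOnCompacts (blowupR μ x (r i) (c i)) := by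
    intro i
    constructor
    intro K hK
    rw [blowupR, Measure.smul_apply, smul_eq_mul,
      Measure.map_apply (hmeas i) hK.measurableSet]
    refine ENNReal.mul_lt_top ENNReal.ofReal_lt_top ?_
    have hr0' : r i ≠ 0 := (hrpos i).ne'
    have himg : (fun y : ℝ => (y - x) / r i) ⁻¹' K = (fun z : ℝ => r i * z + x) '' K := by
      ext y
      simp only [mem_preimage, mem_image]
      constructor
      · intro h
        exact ⟨(y - x) / r i, h, by rw [mul_div_cancel₀ _ hr0', sub_add_cancel]⟩
      · rintro ⟨z, hz, rfl⟩
        have : (r i * z + x - x) / r i = z := by field_simp; ring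
        rwa [this]
    rw [himg]
    exact (hK.image (by continuity)).measure_lt_top
  haveI : IsFiniteMeasureOnCompacts heaviside := by
    constructor
    intro K hK
    exact lt_of_le_of_lt (Measure.restrict_apply_le _ _) hK.measure_lt_top
  -- the normalization sequence
  set a : ℕ → ℝ := fun i => c i * (μ (closedBall x (r i))).toReal with ha_def
  have hapos : ∀ i, 0 < a i := fun i =>
    mul_pos (hcpos i) (ENNReal.toReal_pos (hpos i).ne' (hfin i).ne)
  have haB : ∀ i, a i = (blowupR μ x (r i) (c i) (Icc (-1) 1)).toReal := by
    intro i
    rw [hBmeas i, ENNReal.toReal_mul, ENNReal.toReal_ofReal (hcpos i).le]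
  -- upper bound on a via test functions
  have hub : ∀ ε : ℝ, 0 < ε → ∀ i,
      a i ≤ ∫ y, bumpFn 1 (1 + ε) y ∂(blowupR μ x (r i) (c i)) := by
    intro ε hε i
    haveI := hfc i
    rw [haB i, ← integral_indicator_Icc]
    refine integral_mono (integrable_indicator_Icc _ _ _ (hBlt i))
      ((bumpFn_cont 1 (1 + ε)).integrable_of_hasCompactSupport
        (bumpFn_support (by linarith))) ?_
    intro y
    by_cases hy : y ∈ Icc (-1 : ℝ) 1
    · rw [indicator_of_mem hy, bumpFn_eq_one (by linarith) (abs_le.2 ⟨hy.1, hy.2⟩)]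
    · rw [indicator_of_notMem hy]; exact bumpFn_nonneg _ _ _
  -- lower bound on a
  have hlb : ∀ ε : ℝ, 0 < ε → ε < 1 → ∀ i,
      (∫ y, bumpFn (1 - ε) 1 y ∂(blowupR μ x (r i) (c i))) ≤ a i := by
    intro ε hε hε1 i
    haveI := hfc i
    rw [haB i, ← integral_indicator_Icc]
    refine integral_mono
      ((bumpFn_cont _ 1).integrable_of_hasCompactSupport (bumpFn_support (by linarith)))
      (integrable_indicator_Icc _ _ _ (hBlt i)) ?_
    intro y
    by_cases hy : y ∈ Icc (-1 : ℝ) 1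
    · rw [indicator_of_mem hy]; exact bumpFn_le_one _ _ _
    · rw [indicator_of_notMem hy]
      refine le_of_eq (bumpFn_eq_zero (by linarith) ?_)
      simp only [mem_Icc, not_and_or, not_le] at hy
      rcases hy with h | h
      · exact le_abs.2 (Or.inr (by linarith))
      · exact le_abs.2 (Or.inl h.le)
  -- heaviside integral bounds
  have hHub : ∀ ε : ℝ, 0 < ε → ∫ y, bumpFn 1 (1 + ε) y ∂heaviside ≤ 1 + ε := by
    intro ε hε
    have hfin' : heaviside (Icc (-(1 + ε)) (1 + ε)) < ⊤ := by
      rw [heaviside_Icc (by linarith) (by linarith)]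
      exact ENNReal.ofReal_lt_top
    have hpt : ∀ y, bumpFn 1 (1 + ε) y ≤ (Icc (-(1 + ε)) (1 + ε)).indicator (fun _ => (1:ℝ)) y := by
      intro y
      by_cases hy : y ∈ Icc (-(1 + ε)) (1 + ε)
      · rw [indicator_of_mem hy]; exact bumpFn_le_one _ _ _
      · rw [indicator_of_notMem hy]
        refine le_of_eq (bumpFn_eq_zero (by linarith) ?_)
        simp only [mem_Icc, not_and_or, not_le] at hy
        rcases hy with h | h
        · exact le_abs.2 (Or.inr (by linarith))
        · exact le_abs.2 (Or.inl h.le)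
    have hmono := integral_mono
      ((bumpFn_cont _ _).integrable_of_hasCompactSupport (bumpFn_support (by linarith)))
      (integrable_indicator_Icc heaviside (-(1 + ε)) (1 + ε) hfin') hpt
    refine le_trans hmono ?_
    rw [integral_indicator_Icc, heaviside_Icc (by linarith) (by linarith),
      ENNReal.toReal_ofReal (by linarith)]
  have hHlb : ∀ ε : ℝ, 0 < ε → ε < 1 →
      1 - ε ≤ ∫ y, bumpFn (1 - ε) 1 y ∂heaviside := by
    intro ε hε hε1
    have hfin' : heaviside (Icc (-(1 - ε)) (1 - ε)) < ⊤ := by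
      rw [heaviside_Icc (by linarith) (by linarith)]
      exact ENNReal.ofReal_lt_top
    have hpt : ∀ y, (Icc (-(1 - ε)) (1 - ε)).indicator (fun _ => (1:ℝ)) y ≤ bumpFn (1 - ε) 1 y := by
      intro y
      by_cases hy : y ∈ Icc (-(1 - ε)) (1 - ε)
      · rw [indicator_of_mem hy,
          bumpFn_eq_one (by linarith) (abs_le.2 ⟨hy.1, hy.2⟩)]
      · rw [indicator_of_notMem hy]; exact bumpFn_nonneg _ _ _
    have hmono := integral_mono
      (integrable_indicator_Icc heaviside (-(1 - ε)) (1 - ε) hfin')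
      ((bumpFn_cont _ _).integrable_of_hasCompactSupport (bumpFn_support (by linarith))) hpt
    refine le_trans (le_of_eq ?_) hmono
    rw [integral_indicator_Icc, heaviside_Icc (by linarith) (by linarith),
      ENNReal.toReal_ofReal (by linarith)]
  -- a tends to 1
  have ha1 : Tendsto a atTop (𝓝 1) := by
    rw [Metric.tendsto_atTop]
    intro ε hε
    set δ := min (ε / 4) (1 / 2) with hδdef
    have hδ : 0 < δ := lt_min (by linarith) one_half_pos
    have hδ1 : δ < 1 := lt_of_le_of_lt (min_le_right _ _) (by norm_num)
    have hδε : δ ≤ ε / 4 := min_le_left _ _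
    have hg := hconv (bumpFn 1 (1 + δ)) (bumpFn_cont _ _) (bumpFn_support (by linarith))
    have hh := hconv (bumpFn (1 - δ) 1) (bumpFn_cont _ _) (bumpFn_support (by linarith))
    rw [Metric.tendsto_atTop] at hg hh
    obtain ⟨N1, hN1⟩ := hg δ hδ
    obtain ⟨N2, hN2⟩ := hh δ hδ
    refine ⟨max N1 N2, fun n hn => ?_⟩
    have h1 := hN1 n (le_trans (le_max_left _ _) hn)
    have h2 := hN2 n (le_trans (le_max_right _ _) hn)
    simp only [Real.dist_eq] at h1 h2 ⊢
    have hub' := hub δ hδ n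
    have hlb' := hlb δ hδ hδ1 n
    have hHu := hHub δ hδ
    have hHl := hHlb δ hδ hδ1
    rw [abs_lt] at h1 h2
    rw [abs_lt]
    constructor <;> linarith [h1.1, h1.2, h2.1, h2.2]
  -- conclusion with the identity subsequence
  refine ⟨id, strictMono_id, ?_⟩
  intro ψ hψc hψs
  have hB := hconv ψ hψc hψs
  have key : ∀ i : ℕ,
      ∫ y, ψ y ∂((μ (closedBall x (r i)))⁻¹ • Measure.map (fun y => (y - x) / r i) μ)
      = (∫ y, ψ y ∂(blowupR μ x (r i) (c i))) / a i := by
    intro i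
    rw [integral_smul_measure, blowupR, integral_smul_measure,
      ENNReal.toReal_inv, ENNReal.toReal_ofReal (hcpos i).le]
    have h1 : (μ (closedBall x (r i))).toReal ≠ 0 :=
      (ENNReal.toReal_pos (hpos i).ne' (hfin i).ne).ne'
    have h2 : c i ≠ 0 := (hcpos i).ne'
    rw [smul_eq_mul, smul_eq_mul, ha_def]
    field_simp
  have hfinal : Tendsto (fun i => (∫ y, ψ y ∂(blowupR μ x (r i) (c i))) / a i) atTop
      (𝓝 ((∫ y, ψ y ∂heaviside) / 1)) := hB.div ha1 one_ne_zero
  rw [div_one] at hfinal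
  simp only [id_eq]
  exact hfinal.congr fun i => (key i).symm


end
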